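/- Let c : ℝ_{≥0} → ℝ_{≥0} be convex and strictly increasing, and let P be a nonnegative random variable. Then c^{-1}(E[c(P)]) ≥ E[P]. Consequently, replacing a payment rule p_i(v_i, v_{-i}, r) by the deterministic payment h_i(v_i) = c^{-1}(E_{v_{-i},r}[c(p_i(v_i,v_{-i},r))]) preserves each bidder's interim perceived payment and weakly increases the auctioneer's expected revenue. -/

import Mathlib

open MeasureTheory Set

private lemma convex_contOn {c : ℝ → ℝ} (hconv : ConvexOn ℝ (Ici 0) c)
    (hmono : StrictMonoOn c (Ici 0)) : ContinuousOn c (Ici 0) := by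
  intro x hx
  rcases eq_or_lt_of_le (mem_Ici.1 hx : (0:ℝ) ≤ x) with rfl | hx0
  · -- continuity at 0 within Ici 0, by squeeze
    have hub : ∀ y ∈ Icc (0:ℝ) 1, c y ≤ c 0 + y * (c 1 - c 0) := by
      intro y hy
      have := hconv.2 (mem_Ici.2 le_rfl) (mem_Ici.2 zero_le_one)
        (by linarith [hy.2] : (0:ℝ) ≤ 1 - y) hy.1 (by ring)
      simp only [smul_eq_mul, mul_zero, mul_one, add_zero, zero_add] at this
      linarith [this]
    have hlb : ∀ y ∈ Ici (0:ℝ), c 0 ≤ c y := fun y hy =>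
      (hmono.monotoneOn) (mem_Ici.2 le_rfl) hy hy
    rw [ContinuousWithinAt]
    have h1 : Filter.Tendsto (fun y : ℝ => c 0 + y * (c 1 - c 0)) (nhdsWithin 0 (Ici 0))
        (nhds (c 0)) := by
      have : Filter.Tendsto (fun y : ℝ => c 0 + y * (c 1 - c 0)) (nhds 0)
          (nhds (c 0 + 0 * (c 1 - c 0))) :=
        (continuous_const.add (continuous_id.mul continuous_const)).tendsto 0
      simpa using this.mono_left nhdsWithin_le_nhds
    refine tendsto_of_tendsto_of_tendsto_of_le_of_le' tendsto_const_nhds h1 ?_ ?_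
    · filter_upwards [self_mem_nhdsWithin] with y hy using hlb y hy
    · have hIic : Iic (1:ℝ) ∈ nhdsWithin (0:ℝ) (Ici 0) :=
        nhdsWithin_le_nhds (Iic_mem_nhds one_pos)
      filter_upwards [hIic, self_mem_nhdsWithin] with y h1y h0y
      exact hub y ⟨h0y, h1y⟩
  · have hcont : ContinuousOn c (interior (Ici (0:ℝ))) := hconv.continuousOn_interior
    rw [interior_Ici] at hcont
    exact (hcont.continuousAt (Ioi_mem_nhds hx0)).continuousWithinAt

private lemma key_ineq {Ω : Type*} [MeasurableSpace Ω] (μ : Measure Ω) [IsProbabilityMeasure μ]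
    {c : ℝ → ℝ} (hconv : ConvexOn ℝ (Ici 0) c) (hmono : StrictMonoOn c (Ici 0))
    {Q : Ω → ℝ} (hQ_nonneg : ∀ ω, 0 ≤ Q ω) (hQ_int : Integrable Q μ)
    (hcQ_int : Integrable (fun ω => c (Q ω)) μ)
    {g : ℝ} (hg : 0 ≤ g) (hgc : c g = ∫ ω, c (Q ω) ∂μ) : ∫ ω, Q ω ∂μ ≤ g := by
  have hmem : (∫ ω, Q ω ∂μ) ∈ Ici (0:ℝ) :=
    mem_Ici.2 (integral_nonneg hQ_nonneg)
  have hjensen : c (∫ ω, Q ω ∂μ) ≤ ∫ ω, c (Q ω) ∂μ :=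
    hconv.map_integral_le (convex_contOn hconv hmono) isClosed_Ici
      (Filter.Eventually.of_forall fun ω => mem_Ici.2 (hQ_nonneg ω)) hQ_int hcQ_int
  by_contra hlt
  push_neg at hlt
  have := hmono (mem_Ici.2 hg) hmem hlt
  rw [hgc] at this
  exact absurd hjensen (not_le.2 this)

/-- Let `c` be convex and strictly increasing on `[0,∞)`.  Then for any nonnegative
integrable random variable `P`, `c⁻¹(E[c(P)]) ≥ E[P]` (stated: any nonnegative `g` with
`c g = E[c(P)]` satisfies `g ≥ E[P]`).  Consequently, replacing a payment rule
`pp(v, ω)` by the deterministic payment `h v` with `c (h v) = E_ω[c (pp v ω)]` preserves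
each bidder's interim perceived payment and weakly increases each interim payment. -/
theorem stmt_14 {Ω : Type*} [MeasurableSpace Ω] (μ : Measure Ω) [IsProbabilityMeasure μ]
    (c : ℝ → ℝ)
    (hconv : ConvexOn ℝ (Ici 0) c)
    (hmono : StrictMonoOn c (Ici 0))
    (P : Ω → ℝ) (hP_nonneg : ∀ ω, 0 ≤ P ω)
    (hP_int : Integrable P μ) (hcP_int : Integrable (fun ω => c (P ω)) μ)
    (pp : ℝ → Ω → ℝ) (hpp_nonneg : ∀ val ω, 0 ≤ pp val ω)
    (hpp_int : ∀ val, Integrable (pp val) μ)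
    (hcpp_int : ∀ val, Integrable (fun ω => c (pp val ω)) μ)
    (h : ℝ → ℝ) (hh_nonneg : ∀ val, 0 ≤ h val)
    (hh_def : ∀ val, c (h val) = ∫ ω, c (pp val ω) ∂μ) :
    (∀ g : ℝ, 0 ≤ g → c g = ∫ ω, c (P ω) ∂μ → ∫ ω, P ω ∂μ ≤ g) ∧
    (∀ val : ℝ, c (h val) = ∫ ω, c (pp val ω) ∂μ ∧ ∫ ω, pp val ω ∂μ ≤ h val) := by
  constructor
  · intro g hg hgc
    exact key_ineq μ hconv hmono hP_nonneg hP_int hcP_int hg hgc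
  · intro val
    exact ⟨hh_def val, key_ineq μ hconv hmono (hpp_nonneg val) (hpp_int val)
      (hcpp_int val) (hh_nonneg val) (hh_def val)⟩
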